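/- Let U and V be types, n ∈ ℕ, and for each i ∈ Fin n a cardinality constraint (S i, B i, k i) with S i : Finset U, B i : Finset V nonempty, and k i ∈ ℕ. Assume the constraints are pairwise disjoint: for all i ≠ j, either S i ∩ S j = ∅, or S i = S j and B i ∩ B j = ∅. Assume further there is a value v₀ ∈ V with v₀ ∉ B i for every i. Then there exists an assignment g : U → V satisfying every constraint (i.e., for each i the number of x ∈ S i with g x ∈ B i equals k i) if and only if for every i, the sum of k j over all indices j with S j = S i is at most the cardinality of S i. -/

import Mathlib

open Finset Classical

lemma key_stmt5 {U V : Type*} [DecidableEq U] [DecidableEq V] {n : ℕ}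
    (S : Fin n → Finset U) (B : Fin n → Finset V) (k : Fin n → ℕ)
    (hB : ∀ i, (B i).Nonempty) (v₀ : V) (hv₀ : ∀ i, v₀ ∉ B i) :
    ∀ (J : Finset (Fin n)) (A : Finset U),
      (∀ j ∈ J, ∀ j' ∈ J, j ≠ j' → B j ∩ B j' = ∅) →
      (∑ j ∈ J, k j) ≤ A.card →
      ∃ h : U → V, (∀ x, h x = v₀ ∨ ∃ j ∈ J, h x ∈ B j) ∧
        ∀ j ∈ J, (A.filter (fun x => h x ∈ B j)).card = k j := by
  intro J
  induction J using Finset.induction_on with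
  | empty =>
    intro A _ _
    exact ⟨fun _ => v₀, fun x => Or.inl rfl, fun j hj => absurd hj (by simp)⟩
  | @insert j J' hjJ' ih =>
    intro A hBdisj hsum
    rw [Finset.sum_insert hjJ'] at hsum
    obtain ⟨Aj, hAjA, hAjcard⟩ := Finset.exists_subset_card_eq (s := A) (n := k j) (le_trans (Nat.le_add_right _ _) hsum)
    have hcard' : ∑ j' ∈ J', k j' ≤ (A \ Aj).card := by
      rw [Finset.card_sdiff_of_subset hAjA, hAjcard]
      omega
    obtain ⟨h', hinv', hcount'⟩ := ih (A \ Aj)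
      (fun a ha b hb hab => hBdisj a (Finset.mem_insert_of_mem ha) b (Finset.mem_insert_of_mem hb) hab)
      hcard'
    obtain ⟨b, hb⟩ := hB j
    refine ⟨fun x => if x ∈ Aj then b else h' x, ?_, ?_⟩
    · intro x
      by_cases hx : x ∈ Aj
      · exact Or.inr ⟨j, Finset.mem_insert_self _ _, by simp [hx, hb]⟩
      · rcases hinv' x with h1 | ⟨j', hj', hj'2⟩
        · exact Or.inl (by simp [hx, h1])
        · exact Or.inr ⟨j', Finset.mem_insert_of_mem hj', by simp [hx, hj'2]⟩
    · intro j'' hj''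
      rcases Finset.mem_insert.mp hj'' with rfl | hj''J'
      · -- count for j : filter equals Aj
        have : A.filter (fun x => (if x ∈ Aj then b else h' x) ∈ B j'') = Aj := by
          ext x
          simp only [Finset.mem_filter]
          constructor
          · rintro ⟨hxA, hxB⟩
            by_contra hx
            simp only [hx, if_false] at hxB
            rcases hinv' x with h1 | ⟨j', hj', hj'2⟩
            · rw [h1] at hxB; exact hv₀ _ hxB
            · have hne : j'' ≠ j' := fun h => hjJ' (h ▸ hj')
              have := hBdisj j'' (Finset.mem_insert_self _ _) j' (Finset.mem_insert_of_mem hj') hne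
              have : h' x ∈ B j'' ∩ B j' := Finset.mem_inter.mpr ⟨hxB, hj'2⟩
              rw [‹B j'' ∩ B j' = ∅›] at this
              exact absurd this (Finset.notMem_empty _)
          · intro hx
            exact ⟨hAjA hx, by simp [hx, hb]⟩
        rw [this, hAjcard]
      · -- count for j'' ∈ J'
        have heq : A.filter (fun x => (if x ∈ Aj then b else h' x) ∈ B j'')
            = (A \ Aj).filter (fun x => h' x ∈ B j'') := by
          ext x
          simp only [Finset.mem_filter, Finset.mem_sdiff]
          constructor
          · rintro ⟨hxA, hxB⟩
            by_cases hx : x ∈ Aj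
            · simp only [hx, if_true] at hxB
              have hne : j ≠ j'' := fun h => hjJ' (h ▸ hj''J')
              have hd := hBdisj j (Finset.mem_insert_self _ _) j'' (Finset.mem_insert_of_mem hj''J') hne
              have : b ∈ B j ∩ B j'' := Finset.mem_inter.mpr ⟨hb, hxB⟩
              rw [hd] at this
              exact absurd this (Finset.notMem_empty _)
            · simp only [hx, if_false] at hxB
              exact ⟨⟨hxA, hx⟩, hxB⟩
          · rintro ⟨⟨hxA, hx⟩, hxB⟩
            exact ⟨hxA, by simp [hx, hxB]⟩
        rw [heq]
        exact hcount' j'' hj''J'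

/-- Satisfiability of a pairwise-disjoint set of cardinality constraints:
a satisfying assignment exists iff, for each constraint, the total target of
constraints with the same selection fits in that selection. -/
theorem stmt_5 {U V : Type*} [DecidableEq U] [DecidableEq V] (n : ℕ)
    (S : Fin n → Finset U) (B : Fin n → Finset V) (k : Fin n → ℕ)
    (hB : ∀ i, (B i).Nonempty)
    (hdisj : ∀ i j, i ≠ j → S i ∩ S j = ∅ ∨ (S i = S j ∧ B i ∩ B j = ∅))
    (v₀ : V) (hv₀ : ∀ i, v₀ ∉ B i) :
    (∃ g : U → V, ∀ i, ((S i).filter (fun x => g x ∈ B i)).card = k i) ↔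
      ∀ i, (∑ j ∈ Finset.univ.filter (fun j => S j = S i), k j) ≤ (S i).card := by

  classical
  constructor
  · rintro ⟨g, hg⟩ i
    set J := Finset.univ.filter (fun j => S j = S i) with hJ
    set T : Fin n → Finset U := fun j => (S i).filter (fun x => g x ∈ B j) with hT
    have hTdisj : ∀ j ∈ J, ∀ j' ∈ J, j ≠ j' → Disjoint (T j) (T j') := by
      intro j hj j' hj' hne
      rw [Finset.disjoint_left]
      intro x hx hx'
      simp only [hT, Finset.mem_filter] at hx hx'
      have hSj : S j = S i := (Finset.mem_filter.mp hj).2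
      have hSj' : S j' = S i := (Finset.mem_filter.mp hj').2
      rcases hdisj j j' hne with hc | ⟨_, hc⟩
      · have : x ∈ S j ∩ S j' := Finset.mem_inter.mpr ⟨hSj ▸ hx.1, hSj' ▸ hx.1⟩
        rw [hc] at this; exact absurd this (Finset.notMem_empty _)
      · have : g x ∈ B j ∩ B j' := Finset.mem_inter.mpr ⟨hx.2, hx'.2⟩
        rw [hc] at this; exact absurd this (Finset.notMem_empty _)
    calc ∑ j ∈ J, k j = ∑ j ∈ J, (T j).card := by
            refine Finset.sum_congr rfl fun j hj => ?_
            have hSj : S j = S i := (Finset.mem_filter.mp hj).2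
            rw [← hg j, hSj]
      _ = (J.biUnion T).card := (Finset.card_biUnion hTdisj).symm
      _ ≤ (S i).card := Finset.card_le_card (Finset.biUnion_subset.mpr
            fun j _ => Finset.filter_subset _ _)
  · intro hcard
    -- For each possible selection A, get a local assignment h
    have hH : ∀ A : Finset U, ∃ h : U → V,
        ((∀ j j', S j = A → S j' = A → j ≠ j' → B j ∩ B j' = ∅) ∧
          ∑ j ∈ Finset.univ.filter (fun j => S j = A), k j ≤ A.card) →
        ∀ j, S j = A → (A.filter (fun x => h x ∈ B j)).card = k j := by
      intro A
      by_cases hp : (∀ j j', S j = A → S j' = A → j ≠ j' → B j ∩ B j' = ∅) ∧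
          ∑ j ∈ Finset.univ.filter (fun j => S j = A), k j ≤ A.card
      · obtain ⟨h, _, h2⟩ := key_stmt5 S B k hB v₀ hv₀
          (Finset.univ.filter (fun j => S j = A)) A
          (fun a ha b hb hab => hp.1 a b (Finset.mem_filter.mp ha).2 (Finset.mem_filter.mp hb).2 hab)
          hp.2
        exact ⟨h, fun _ j hj => h2 j (by simp [hj])⟩
      · exact ⟨fun _ => v₀, fun hc => absurd hc hp⟩
    choose H hHspec using hH
    refine ⟨fun x => if hx : ∃ i, x ∈ S i then H (S hx.choose) x else v₀, fun i => ?_⟩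
    have hgx : ∀ x ∈ S i,
        (if hx : ∃ i, x ∈ S i then H (S hx.choose) x else v₀) = H (S i) x := by
      intro x hxi
      have hx : ∃ i', x ∈ S i' := ⟨i, hxi⟩
      rw [dif_pos hx]
      have hxc : x ∈ S hx.choose := hx.choose_spec
      by_cases he : hx.choose = i
      · rw [he]
      · rcases hdisj hx.choose i he with hc | ⟨hc, _⟩
        · exfalso
          have : x ∈ S hx.choose ∩ S i := Finset.mem_inter.mpr ⟨hxc, hxi⟩
          rw [hc] at this; exact absurd this (Finset.notMem_empty _)
        · rw [hc]
    have hfe : (S i).filter (fun x => (if hx : ∃ i, x ∈ S i then H (S hx.choose) x else v₀) ∈ B i)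
        = (S i).filter (fun x => H (S i) x ∈ B i) := by
      apply Finset.filter_congr
      intro x hx
      rw [hgx x hx]
    rw [hfe]
    by_cases hSe : S i = ∅
    · have hki : k i = 0 := by
        have h1 : k i ≤ ∑ j ∈ Finset.univ.filter (fun j => S j = S i), k j :=
          Finset.single_le_sum (fun _ _ => Nat.zero_le _) (by simp)
        have h2 := hcard i
        have h3 : (S i).card = 0 := by rw [hSe]; rfl
        omega
      rw [hSe]
      simp [hki]
    · apply hHspec (S i) _ i rfl
      refine ⟨?_, hcard i⟩
      intro j j' hj hj' hne
      rcases hdisj j j' hne with hc | ⟨_, hc⟩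
      · rw [hj, hj'] at hc
        rw [Finset.inter_self] at hc
        exact absurd hc hSe
      · exact hc
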